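/- arXiv:2602.05025 — 3 statements merged into one kernel-verified Lean document; each statement's English description precedes it below -/
import Mathlib

section
/- Let I : ℝ → ℝ be a nonnegative measurable function vanishing on (−∞,0) with a := ∫₀^∞ I(u) du < 1, let T > 0, let g : [0,T] → ℝ be nonnegative and integrable, and let f : [0,T] → ℝ be nonnegative and integrable and satisfy f(t) ≤ g(t) + ∫₀^t I(t−s) f(s) ds for almost every t ∈ [0,T]. Then ∫₀^T f(t) dt ≤ (1/(1−a)) ∫₀^T g(s) ds. -/
open MeasureTheory Set
open scoped ENNReal

/-- Volterra renewal-comparison inequality: if `f ≤ g + I ⋆ f` a.e. on `[0,T]` with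
nonnegative kernel `I` of total mass `a < 1`, then `∫₀ᵀ f ≤ (1/(1-a)) ∫₀ᵀ g`. -/
theorem volterra_comparison_inequality
    (I : ℝ → ℝ) (hImeas : Measurable I) (hInn : ∀ u, 0 ≤ I u)
    (hIzero : ∀ u : ℝ, u < 0 → I u = 0)
    (hIint : IntegrableOn I (Ioi 0))
    (a : ℝ) (ha : a = ∫ u in Ioi (0:ℝ), I u) (ha1 : a < 1)
    (T : ℝ) (hT : 0 < T)
    (g f : ℝ → ℝ)
    (hgnn : ∀ t ∈ Icc (0:ℝ) T, 0 ≤ g t) (hgint : IntegrableOn g (Icc 0 T))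
    (hfnn : ∀ t ∈ Icc (0:ℝ) T, 0 ≤ f t) (hfint : IntegrableOn f (Icc 0 T))
    (hineq : ∀ᵐ t ∂(volume.restrict (Icc (0:ℝ) T)),
      f t ≤ g t + ∫ s in (0:ℝ)..t, I (t - s) * f s) :
    (∫ t in Icc (0:ℝ) T, f t) ≤ (1 / (1 - a)) * ∫ s in Icc (0:ℝ) T, g s := by
  set μ : Measure ℝ := volume.restrict (Icc (0:ℝ) T) with hμ
  have ha0 : 0 ≤ a := by
    rw [ha]; exact setIntegral_nonneg measurableSet_Ioi fun u _ => hInn u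
  have hfae : 0 ≤ᵐ[μ] f := (ae_restrict_iff' measurableSet_Icc).2 (ae_of_all _ hfnn)
  have hgae : 0 ≤ᵐ[μ] g := (ae_restrict_iff' measurableSet_Icc).2 (ae_of_all _ hgnn)
  -- Step A : kernel mass bound
  have hA : ∀ s : ℝ, ∫⁻ t in Icc (0:ℝ) T, ENNReal.ofReal (I (t - s)) ≤ ENNReal.ofReal a := by
    intro s
    calc ∫⁻ t in Icc (0:ℝ) T, ENNReal.ofReal (I (t - s))
        ≤ ∫⁻ t, ENNReal.ofReal (I (t - s)) := setLIntegral_le_lintegral _ _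
      _ = ∫⁻ u, ENNReal.ofReal (I u) := lintegral_sub_right_eq_self (fun u => ENNReal.ofReal (I u)) s
      _ = ∫⁻ u in Ioi 0, ENNReal.ofReal (I u) := by
          rw [← lintegral_add_compl (fun u => ENNReal.ofReal (I u)) (measurableSet_Ioi (a := (0:ℝ)))]
          have hz : ∫⁻ u in (Ioi (0:ℝ))ᶜ, ENNReal.ofReal (I u) = 0 := by
            rw [compl_Ioi]
            have h0 : ∫⁻ u in Iio (0:ℝ), ENNReal.ofReal (I u) = 0 := by
              rw [setLIntegral_eq_zero_iff measurableSet_Iio hImeas.ennreal_ofReal]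
              exact ae_of_all _ fun u hu => by simp [hIzero u hu]
            have he : ∫⁻ u in Iic (0:ℝ), ENNReal.ofReal (I u)
                = ∫⁻ u in Iio (0:ℝ), ENNReal.ofReal (I u) :=
              setLIntegral_congr (Iio_ae_eq_Iic (a := (0:ℝ))).symm
            rw [he, h0]
          rw [hz, add_zero]
      _ = ENNReal.ofReal a := by
          rw [ha, ← ofReal_integral_eq_lintegral_ofReal hIint
            ((ae_restrict_iff' measurableSet_Ioi).2 (ae_of_all _ fun u _ => hInn u))]
  -- L t : lintegral convolution term
  set L : ℝ → ℝ≥0∞ := fun t => ∫⁻ s in Icc (0:ℝ) T, ENNReal.ofReal (I (t - s) * f s) with hLdef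
  -- Step B
  have hB : ∀ᵐ t ∂μ, ENNReal.ofReal (f t) ≤ ENNReal.ofReal (g t) + L t := by
    filter_upwards [hineq, ae_restrict_mem measurableSet_Icc] with t hineqt ht
    have h1 : ENNReal.ofReal (∫ s in (0:ℝ)..t, I (t - s) * f s) ≤ L t := by
      by_cases hint : IntervalIntegrable (fun s => I (t - s) * f s) volume 0 t
      · rw [intervalIntegral.intervalIntegral_eq_integral_uIoc]
        have huIoc : uIoc (0:ℝ) t = Ioc 0 t := uIoc_of_le ht.1
        rw [if_pos ht.1, smul_eq_mul, one_mul, huIoc]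
        have hsub : Ioc (0:ℝ) t ⊆ Icc 0 T := Ioc_subset_Icc_self.trans (Icc_subset_Icc le_rfl ht.2)
        calc ENNReal.ofReal (∫ s in Ioc (0:ℝ) t, I (t - s) * f s)
            = ∫⁻ s in Ioc (0:ℝ) t, ENNReal.ofReal (I (t - s) * f s) := by
              apply ofReal_integral_eq_lintegral_ofReal
              · rw [← huIoc]; exact hint.def'
              · filter_upwards [ae_restrict_mem measurableSet_Ioc] with s hs
                exact mul_nonneg (hInn _) (hfnn s (hsub hs))
          _ ≤ L t := lintegral_mono_set hsub
      · rw [intervalIntegral.integral_undef hint]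
        simp
    calc ENNReal.ofReal (f t) ≤ ENNReal.ofReal (g t + ∫ s in (0:ℝ)..t, I (t - s) * f s) :=
          ENNReal.ofReal_le_ofReal hineqt
      _ ≤ ENNReal.ofReal (g t) + ENNReal.ofReal (∫ s in (0:ℝ)..t, I (t - s) * f s) :=
          ENNReal.ofReal_add_le
      _ ≤ ENNReal.ofReal (g t) + L t := add_le_add le_rfl h1
  -- notation for the lintegrals
  set F' : ℝ≥0∞ := ∫⁻ t, ENNReal.ofReal (f t) ∂μ with hF'
  set G' : ℝ≥0∞ := ∫⁻ t, ENNReal.ofReal (g t) ∂μ with hG'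
  have hgmeas : AEMeasurable (fun t => ENNReal.ofReal (g t)) μ :=
    hgint.aemeasurable.ennreal_ofReal
  have hfmeas : AEMeasurable (fun s => ENNReal.ofReal (f s)) μ :=
    hfint.aemeasurable.ennreal_ofReal
  -- Step C
  have hC : F' ≤ G' + ∫⁻ t, L t ∂μ := by
    calc F' ≤ ∫⁻ t, (ENNReal.ofReal (g t) + L t) ∂μ := lintegral_mono_ae hB
      _ = G' + ∫⁻ t, L t ∂μ := lintegral_add_left' hgmeas _
  -- Step D : Tonelli
  have hker : AEMeasurable (Function.uncurry fun t s =>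
      ENNReal.ofReal (I (t - s)) * ENNReal.ofReal (f s)) (μ.prod μ) := by
    show AEMeasurable (fun p : ℝ × ℝ => ENNReal.ofReal (I (p.1 - p.2)) * ENNReal.ofReal (f p.2)) (μ.prod μ)
    exact (((hImeas.comp (measurable_fst.sub measurable_snd)).ennreal_ofReal).aemeasurable).mul hfmeas.comp_snd
  have hD : (∫⁻ t, L t ∂μ) ≤ ENNReal.ofReal a * F' := by
    have hLeq : ∀ t, L t = ∫⁻ s, ENNReal.ofReal (I (t - s)) * ENNReal.ofReal (f s) ∂μ := by
      intro t
      simp only [hLdef]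
      refine lintegral_congr fun s => ?_
      exact ENNReal.ofReal_mul (hInn _)
    calc (∫⁻ t, L t ∂μ)
        = ∫⁻ t, ∫⁻ s, ENNReal.ofReal (I (t - s)) * ENNReal.ofReal (f s) ∂μ ∂μ :=
          lintegral_congr hLeq
      _ = ∫⁻ s, ∫⁻ t, ENNReal.ofReal (I (t - s)) * ENNReal.ofReal (f s) ∂μ ∂μ :=
          lintegral_lintegral_swap hker
      _ = ∫⁻ s, (∫⁻ t, ENNReal.ofReal (I (t - s)) ∂μ) * ENNReal.ofReal (f s) ∂μ := by
          refine lintegral_congr fun s => ?_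
          rw [lintegral_mul_const' _ _ ENNReal.ofReal_ne_top]
      _ ≤ ∫⁻ s, ENNReal.ofReal a * ENNReal.ofReal (f s) ∂μ := by
          refine lintegral_mono fun s => ?_
          exact mul_le_mul_left (hA s) _
      _ = ENNReal.ofReal a * F' := lintegral_const_mul' _ _ ENNReal.ofReal_ne_top
  -- convert to reals
  have hFeq : ENNReal.ofReal (∫ t, f t ∂μ) = F' := ofReal_integral_eq_lintegral_ofReal hfint hfae
  have hGeq : ENNReal.ofReal (∫ t, g t ∂μ) = G' := ofReal_integral_eq_lintegral_ofReal hgint hgae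
  set Fr : ℝ := ∫ t, f t ∂μ with hFr
  set Gr : ℝ := ∫ t, g t ∂μ with hGr
  have hFrnn : 0 ≤ Fr := integral_nonneg_of_ae hfae
  have hGrnn : 0 ≤ Gr := integral_nonneg_of_ae hgae
  have hkey : ENNReal.ofReal Fr ≤ ENNReal.ofReal (Gr + a * Fr) := by
    rw [hFeq]
    calc F' ≤ G' + ENNReal.ofReal a * F' := hC.trans (add_le_add le_rfl hD)
      _ = ENNReal.ofReal (Gr + a * Fr) := by
          rw [← hGeq, ← hFeq, ← ENNReal.ofReal_mul ha0,
            ← ENNReal.ofReal_add hGrnn (mul_nonneg ha0 hFrnn)]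
  have hreal : Fr ≤ Gr + a * Fr :=
    (ENNReal.ofReal_le_ofReal_iff (by positivity)).1 hkey
  have h1a : 0 < 1 - a := by linarith
  rw [div_mul_eq_mul_div, le_div_iff₀ h1a, one_mul] at *
  nlinarith [hreal]
end

section
/- Let T > 0 and Ŝ ≥ 0, and let Ĝ : [0,T] → [0,Ŝ] be continuous and nondecreasing with Ĝ(0) = 0 and Ĝ(T) = Ŝ. Define G : [0,Ŝ] → [0,T] by G(t) := inf{s ∈ [0,T] : Ĝ(s) > t}, with the convention inf ∅ = T. Then for every bounded measurable g : [0,T] → ℝ and every t ∈ [0,Ŝ], ∫_{[0,G(t)]} g(s) μ_Ĝ(ds) = ∫₀^t g(G(v)) dv, where μ_Ĝ is the Lebesgue–Stieltjes measure of Ĝ. -/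
open MeasureTheory Set Filter Topology Function

/-- Time-change identity (Lemma 4.7): for a continuous nondecreasing `Ĝ : [0,T] → [0,Ŝ]`
with `Ĝ(0) = 0`, `Ĝ(T) = Ŝ` (extended by `0` to the left and by `Ŝ` to the right and
viewed as a Stieltjes function), and its generalized inverse
`G(t) = inf {s ∈ [0,T] : Ĝ(s) > t}` (with `inf ∅ = T`), every bounded measurable `g`
satisfies `∫_{[0,G(t)]} g dμ_Ĝ = ∫₀ᵗ g(G(v)) dv` for all `t ∈ [0,Ŝ]`. -/
theorem time_change_identity
    (T S : ℝ) (hT : 0 < T) (hS : 0 ≤ S)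
    (Ghat : StieltjesFunction ℝ) (hcont : Continuous Ghat)
    (h0 : ∀ s : ℝ, s ≤ 0 → Ghat s = 0)
    (hend : ∀ s : ℝ, T ≤ s → Ghat s = S)
    (G : ℝ → ℝ)
    (hG : ∀ t, G t = sInf ({s : ℝ | s ∈ Icc (0:ℝ) T ∧ t < Ghat s} ∪ {T}))
    (g : ℝ → ℝ) (hgm : Measurable g) (C : ℝ) (hgb : ∀ s, |g s| ≤ C)
    (t : ℝ) (ht : t ∈ Icc (0:ℝ) S) :
    (∫ s in Icc (0:ℝ) (G t), g s ∂Ghat.measure) = ∫ v in Ioc (0:ℝ) t, g (G v) := by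
  have hmono := Ghat.mono
  have hG0 : Ghat 0 = 0 := h0 0 le_rfl
  have hGT : Ghat T = S := hend T le_rfl
  have ht0 := ht.1
  have htS := ht.2
  set A : ℝ → Set ℝ := fun u => {s : ℝ | s ∈ Icc (0:ℝ) T ∧ u < Ghat s} ∪ {T} with hA
  have hTA : ∀ u, T ∈ A u := fun u => Or.inr rfl
  have hbdd : ∀ u, BddBelow (A u) := by
    intro u
    refine ⟨0, ?_⟩
    rintro s (⟨⟨h1, _⟩, _⟩ | rfl)
    · exact h1
    · exact hT.le
  have hne : ∀ u, (A u).Nonempty := fun u => ⟨T, hTA u⟩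
  have hGle : ∀ u, G u ≤ T := fun u => by
    rw [hG u]; exact csInf_le (hbdd u) (hTA u)
  have hGge : ∀ u, 0 ≤ G u := fun u => by
    rw [hG u]
    apply le_csInf (hne u)
    rintro s (⟨⟨h1, _⟩, _⟩ | rfl)
    · exact h1
    · exact hT.le
  have hGmono : Monotone G := by
    intro u v huv
    rw [hG u, hG v]
    apply csInf_le_csInf (hbdd u) (hne v)
    rintro s (⟨hs, h2⟩ | rfl)
    · exact Or.inl ⟨hs, lt_of_le_of_lt huv h2⟩
    · exact Or.inr rfl
  have hGmeas : Measurable G := hGmono.measurable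
  -- `Ghat (G u) = u` for `u ∈ [0, S]`
  have hGGhat : ∀ u, 0 ≤ u → u ≤ S → Ghat (G u) = u := by
    intro u hu0 huS
    have hle : Ghat (G u) ≤ u := by
      have h1 : ∀ s ∈ Iio (G u), Ghat s ≤ u := by
        intro s hs
        rcases lt_or_ge s 0 with h | h
        · rw [h0 s h.le]; exact hu0
        · by_contra hc
          push_neg at hc
          have hsA : s ∈ A u := Or.inl ⟨⟨h, (le_of_lt hs).trans (hGle u)⟩, hc⟩
          have := csInf_le (hbdd u) hsA
          rw [← hG u] at this
          exact absurd this (not_le.2 hs)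
      have htend : Tendsto Ghat (𝓝[<] (G u)) (𝓝 (Ghat (G u))) :=
        (hcont.tendsto (G u)).mono_left nhdsWithin_le_nhds
      exact le_of_tendsto htend (eventually_nhdsWithin_of_forall h1)
    have hge : u ≤ Ghat (G u) := by
      have h1 : ∀ s ∈ Ioi (G u), u ≤ Ghat s := by
        intro s hs
        have hs' : sInf (A u) < s := by rw [← hG u]; exact hs
        obtain ⟨a, ha, has⟩ := exists_lt_of_csInf_lt (hne u) hs'
        rcases ha with ⟨_, h2⟩ | rfl
        · exact (le_of_lt h2).trans (hmono has.le)
        · calc u ≤ S := huS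
            _ = Ghat a := hGT.symm
            _ ≤ Ghat s := hmono has.le
      have htend : Tendsto Ghat (𝓝[>] (G u)) (𝓝 (Ghat (G u))) :=
        (hcont.tendsto (G u)).mono_left nhdsWithin_le_nhds
      exact ge_of_tendsto htend (eventually_nhdsWithin_of_forall h1)
    linarith
  have hGhatGt : Ghat (G t) = t := hGGhat t ht0 htS
  have hleftLim0 : leftLim (⇑Ghat) 0 = Ghat 0 :=
    leftLim_eq_of_tendsto
      ((hcont.tendsto 0).mono_left nhdsWithin_le_nhds)
  -- the key measure identity
  have hfin1 : IsFiniteMeasure (volume.restrict (Ioc (0:ℝ) t)) := by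
    constructor
    rw [Measure.restrict_apply_univ, Real.volume_Ioc]
    exact ENNReal.ofReal_lt_top
  have hfin2 : IsFiniteMeasure ((volume.restrict (Ioc (0:ℝ) t)).map G) := by
    constructor
    calc ((volume.restrict (Ioc (0:ℝ) t)).map G) univ
        = (volume.restrict (Ioc (0:ℝ) t)) (G ⁻¹' univ) :=
          Measure.map_apply hGmeas MeasurableSet.univ
      _ ≤ (volume.restrict (Ioc (0:ℝ) t)) univ := measure_mono (subset_univ _)
      _ < ⊤ := hfin1.measure_univ_lt_top
  have key : (volume.restrict (Ioc (0:ℝ) t)).map G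
      = Ghat.measure.restrict (Icc (0:ℝ) (G t)) := by
    refine Measure.ext_of_Iic _ _ (fun a => ?_)
    -- left side
    have hlhs : ((volume.restrict (Ioc (0:ℝ) t)).map G) (Iic a)
        = ENNReal.ofReal (min t (Ghat a)) := by
      rw [Measure.map_apply hGmeas measurableSet_Iic,
        Measure.restrict_apply (hGmeas measurableSet_Iic)]
      have hGa0 : 0 ≤ Ghat a := by
        rcases le_or_gt a 0 with h | h
        · rw [h0 a h]
        · rw [← hG0]; exact hmono h.le
      have hub : G ⁻¹' Iic a ∩ Ioc 0 t ⊆ Ioc 0 (min t (Ghat a)) := by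
        rintro v ⟨hv1, hv2, hv3⟩
        refine ⟨hv2, le_min hv3 ?_⟩
        calc v = Ghat (G v) := (hGGhat v hv2.le (hv3.trans htS)).symm
          _ ≤ Ghat a := hmono hv1
      have hlb : Ioo 0 (min t (Ghat a)) ⊆ G ⁻¹' Iic a ∩ Ioc 0 t := by
        rintro v ⟨hv1, hv2⟩
        have hvt : v < t := hv2.trans_le (min_le_left _ _)
        have hva : v < Ghat a := hv2.trans_le (min_le_right _ _)
        have ha0 : 0 ≤ a := by
          by_contra h
          push_neg at h
          rw [h0 a h.le] at hva
          linarith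
        refine ⟨?_, hv1, hvt.le⟩
        show G v ≤ a
        rcases le_or_gt a T with haT | haT
        · rw [hG v]
          exact csInf_le (hbdd v) (Or.inl ⟨⟨ha0, haT⟩, hva⟩)
        · exact (hGle v).trans haT.le
      refine le_antisymm ?_ ?_
      · refine le_trans (measure_mono hub) ?_
        rw [Real.volume_Ioc, sub_zero]
      · have h1 : ENNReal.ofReal (min t (Ghat a)) = volume (Ioo 0 (min t (Ghat a))) := by
          rw [Real.volume_Ioo, sub_zero]
        rw [h1]
        exact measure_mono hlb
    rw [hlhs, Measure.restrict_apply measurableSet_Iic]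
    have hset : Iic a ∩ Icc 0 (G t) = Icc 0 (min a (G t)) := by
      ext v
      simp only [mem_inter_iff, mem_Iic, mem_Icc, le_min_iff]
      tauto
    rw [hset]
    rcases lt_or_ge a 0 with ha | ha
    · have h1 : Icc (0:ℝ) (min a (G t)) = ∅ :=
        Icc_eq_empty (by simp only [not_le]; exact (min_le_left a (G t)).trans_lt ha)
      rw [h1, measure_empty, h0 a ha.le, min_eq_right ht0]
      simp
    · rw [Ghat.measure_Icc, hleftLim0, hG0, sub_zero]
      congr 1
      rcases le_total a (G t) with hle | hle
      · rw [min_eq_left hle, min_eq_right]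
        calc Ghat a ≤ Ghat (G t) := hmono hle
          _ = t := hGhatGt
      · rw [min_eq_right hle, min_eq_left, hGhatGt]
        rw [← hGhatGt]
        exact hmono hle
  calc (∫ s in Icc (0:ℝ) (G t), g s ∂Ghat.measure)
      = ∫ s, g s ∂((volume.restrict (Ioc (0:ℝ) t)).map G) := by rw [key]
    _ = ∫ v in Ioc (0:ℝ) t, g (G v) :=
        integral_map hGmeas.aemeasurable hgm.aestronglyMeasurable
end

section
/- Let (Ω, 𝓕, P) be a probability space with a filtration (𝓕_i)_{i=0,…,N} for a horizon N ∈ ℕ, and let (Z_i)_{i=0,…,N} be an adapted process with each Z_i integrable. Define the Snell envelope (U_i) by U_N = Z_N and U_i = max(Z_i, E[U_{i+1} | 𝓕_i]) almost surely for 0 ≤ i < N. Then τ* := min{i ∈ {0,…,N} : U_i = Z_i} is a stopping time and E[Z_{τ*}] = E[U_0]; consequently E[U_0] = max over all stopping times τ with values in {0,…,N} of E[Z_τ], and the maximum is attained at τ*. -/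
open MeasureTheory

private lemma stronglyMeasurable_max_aux {Ω : Type*} {m : MeasurableSpace Ω}
    {f g : Ω → ℝ} (hf : StronglyMeasurable[m] f) (hg : StronglyMeasurable[m] g) :
    StronglyMeasurable[m] (fun ω => max (f ω) (g ω)) := hf.sup hg

/-- Attainment half of the discrete-time dynamic programming principle with optimal
stopping (Theorem 3.3): if `U` is the Snell envelope of an adapted integrable process
`Z` over the horizon `{0,…,N}` (`U_N = Z_N`, `U_i = max(Z_i, E[U_{i+1} | 𝓕_i])`), then
`τ* := min {i ∈ {0,…,N} : U_i = Z_i}` is a stopping time with `E[Z_{τ*}] = E[U_0]`,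
and `E[U_0]` is the maximum of `E[Z_τ]` over all stopping times `τ` valued in
`{0,…,N}`; in particular the maximum is attained at `τ*`. -/
theorem snell_envelope_optimal_stopping
    {Ω : Type*} {m0 : MeasurableSpace Ω} (μ : Measure Ω) [IsProbabilityMeasure μ]
    (N : ℕ) (ℱ : Filtration ℕ m0)
    (Z : ℕ → Ω → ℝ)
    (hadapt : ∀ i ≤ N, StronglyMeasurable[ℱ i] (Z i))
    (hint : ∀ i ≤ N, Integrable (Z i) μ)
    (U : ℕ → Ω → ℝ)
    (hUN : U N = Z N)
    (hUrec : ∀ i < N, U i = fun ω => max (Z i ω) ((μ[U (i + 1) | ℱ i]) ω))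
    (τstar : Ω → ℕ)
    (hτstar : τstar = fun ω => sInf {i | i ≤ N ∧ U i ω = Z i ω}) :
    IsStoppingTime ℱ (fun ω => (τstar ω : WithTop ℕ)) ∧
    (∫ ω, Z (τstar ω) ω ∂μ) = (∫ ω, U 0 ω ∂μ) ∧
    (∀ τ : Ω → ℕ, IsStoppingTime ℱ (fun ω => (τ ω : WithTop ℕ)) → (∀ ω, τ ω ≤ N) →
      (∫ ω, Z (τ ω) ω ∂μ) ≤ ∫ ω, U 0 ω ∂μ) := by
  -- measurability and integrability of the Snell envelope, by backward induction
  have hUaux : ∀ k, ∀ i, i + k = N →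
      StronglyMeasurable[ℱ i] (U i) ∧ Integrable (U i) μ := by
    intro k
    induction k with
    | zero =>
      intro i h
      have : i = N := by omega
      subst this
      rw [hUN]
      exact ⟨hadapt i le_rfl, hint i le_rfl⟩
    | succ k ih =>
      intro i h
      have hi : i < N := by omega
      obtain ⟨hSM1, hInt1⟩ := ih (i + 1) (by omega)
      refine ⟨?_, ?_⟩
      · simp only [hUrec i hi]
        exact stronglyMeasurable_max_aux (hadapt i hi.le) stronglyMeasurable_condExp
      · simp only [hUrec i hi]
        exact (hint i hi.le).sup integrable_condExp
  have hUSM : ∀ i ≤ N, StronglyMeasurable[ℱ i] (U i) := fun i hi =>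
    (hUaux (N - i) i (by omega)).1
  have hUint : ∀ i ≤ N, Integrable (U i) μ := fun i hi =>
    (hUaux (N - i) i (by omega)).2
  -- Z ≤ U pointwise
  have hZleU : ∀ i ≤ N, ∀ ω, Z i ω ≤ U i ω := by
    intro i hi ω
    rcases lt_or_eq_of_le hi with h | h
    · rw [hUrec i h]; exact le_max_left _ _
    · subst h; rw [hUN]
  -- conditional expectation ≤ U pointwise
  have hcond_le : ∀ i, i < N → ∀ ω, (μ[U (i + 1)|ℱ i]) ω ≤ U i ω := by
    intro i hi ω
    rw [hUrec i hi]; exact le_max_right _ _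
  -- basic facts about τstar
  have hSne : ∀ ω, ({i | i ≤ N ∧ U i ω = Z i ω}).Nonempty := fun ω =>
    ⟨N, le_rfl, congrFun hUN ω⟩
  have hτstar_le : ∀ ω, τstar ω ≤ N := by
    intro ω; rw [hτstar]; exact (Nat.sInf_mem (hSne ω)).1
  have hτstar_eq : ∀ ω, U (τstar ω) ω = Z (τstar ω) ω := by
    intro ω
    have := Nat.sInf_mem (hSne ω)
    rw [hτstar]; exact this.2
  have hτstar_ne : ∀ i, ∀ ω, i < τstar ω → i ≤ N → U i ω ≠ Z i ω := by
    intro i ω hlt hiN h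
    have : τstar ω ≤ i := by rw [hτstar]; exact Nat.sInf_le ⟨hiN, h⟩
    omega
  -- τstar is a stopping time
  have hst : IsStoppingTime ℱ (fun ω => (τstar ω : WithTop ℕ)) := by
    intro i
    suffices MeasurableSet[ℱ i] {ω | τstar ω ≤ i} by convert this using 2; ext ω; simp
    have hset : {ω | τstar ω ≤ i}
        = ⋃ j ∈ Finset.range (min i N + 1), {ω | U j ω = Z j ω} := by
      ext ω
      simp only [Set.mem_setOf_eq, Set.mem_iUnion, Finset.mem_range, exists_prop]
      constructor
      · intro h
        have hmem := Nat.sInf_mem (hSne ω)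
        rw [hτstar] at h
        have h' : sInf {i | i ≤ N ∧ U i ω = Z i ω} ≤ i := h
        exact ⟨sInf {i | i ≤ N ∧ U i ω = Z i ω},
          Nat.lt_succ_of_le (le_min h' hmem.1), hmem.2⟩
      · rintro ⟨j, hj, hUZ⟩
        have : τstar ω ≤ j := by
          rw [hτstar]; exact Nat.sInf_le ⟨by omega, hUZ⟩
        omega
    rw [hset]
    refine (Finset.range (min i N + 1)).measurableSet_biUnion fun j hj => ?_
    have hjN : j ≤ min i N := by
      simpa [Nat.lt_succ_iff] using hj
    exact ℱ.mono (le_trans hjN (min_le_left _ _)) _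
      ((hUSM j (le_trans hjN (min_le_right _ _))).measurableSet_eq_fun
        (hadapt j (le_trans hjN (min_le_right _ _))))
  -- integrability of the stopped process
  have hSVint : ∀ (τ : Ω → ℕ), IsStoppingTime ℱ (fun ω => (τ ω : WithTop ℕ)) → (∀ ω, τ ω ≤ N) →
      ∀ i, Integrable (fun ω => U (min (τ ω) i) ω) μ := by
    intro τ hτ hτle i
    have h1 : IsStoppingTime ℱ fun ω => ((min (τ ω) i : ℕ) : WithTop ℕ) := hτ.min_const i
    have h2 : ∀ ω, ((min (τ ω) i : ℕ) : WithTop ℕ) ≤ ((N + i : ℕ) : WithTop ℕ) := fun ω =>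
      by exact_mod_cast (show min (τ ω) i ≤ N + i by have := hτle ω; omega)
    have h3 := integrable_stoppedValue ℕ h1
      (u := fun j => U (min j N)) (fun j => hUint _ (min_le_right _ _)) h2
    have : stoppedValue (fun j => U (min j N)) (fun ω => ((min (τ ω) i : ℕ) : WithTop ℕ))
        = fun ω => U (min (τ ω) i) ω := by
      funext ω
      simp only [stoppedValue]
      show U (min (min (τ ω) i) N) ω = _
      congr 1
      have := hτle ω
      omega
    rwa [this] at h3
  -- one-step decomposition of the expected stopped value
  have step : ∀ (τ : Ω → ℕ), IsStoppingTime ℱ (fun ω => (τ ω : WithTop ℕ)) → (∀ ω, τ ω ≤ N) → ∀ i, i < N →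
      (∫ ω, U (min (τ ω) (i + 1)) ω ∂μ)
        = (∫ ω, U (min (τ ω) i) ω ∂μ)
          + ∫ ω in {ω | i < τ ω}, ((μ[U (i + 1)|ℱ i]) ω - U i ω) ∂μ := by
    intro τ hτ hτle i hi
    set A : Set Ω := {ω | i < τ ω} with hAdef
    have hA : MeasurableSet[ℱ i] A := by
      have : A = {ω | (τ ω : WithTop ℕ) ≤ (i : WithTop ℕ)}ᶜ := by
        ext ω; simp [A, not_le]
      rw [this]
      exact (hτ i).compl
    have hAm0 : MeasurableSet A := ℱ.le i _ hA
    have hpt : (fun ω => U (min (τ ω) (i + 1)) ω)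
        = fun ω => U (min (τ ω) i) ω
            + A.indicator (fun ω => U (i + 1) ω - U i ω) ω := by
      funext ω
      by_cases h : i < τ ω
      · have h1 : min (τ ω) (i + 1) = i + 1 := by omega
        have h2 : min (τ ω) i = i := by omega
        have h3 : A.indicator (fun ω => U (i + 1) ω - U i ω) ω
            = U (i + 1) ω - U i ω := Set.indicator_of_mem (show ω ∈ A from h) _
        rw [h1, h2, h3]
        ring
      · have h1 : min (τ ω) (i + 1) = τ ω := by omega
        have h2 : min (τ ω) i = τ ω := by omega
        have h3 : A.indicator (fun ω => U (i + 1) ω - U i ω) ω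
            = 0 := Set.indicator_of_notMem (show ω ∉ A from h) _
        rw [h1, h2, h3]
        ring
    have hind : Integrable (A.indicator fun ω => U (i + 1) ω - U i ω) μ :=
      (Integrable.sub (hUint (i + 1) hi) (hUint i hi.le)).indicator hAm0
    rw [hpt, integral_add (hSVint τ hτ hτle i) hind, integral_indicator hAm0]
    congr 1
    have hce : ∫ ω in A, U (i + 1) ω ∂μ = ∫ ω in A, (μ[U (i + 1)|ℱ i]) ω ∂μ :=
      (setIntegral_condExp (ℱ.le i) (hUint (i + 1) hi) hA).symm
    rw [integral_sub ((hUint (i + 1) hi).integrableOn) ((hUint i hi.le).integrableOn),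
      hce, ← integral_sub (integrable_condExp.integrableOn) ((hUint i hi.le).integrableOn)]
  -- inequality: the stopped expected value is at most E[U 0]
  have main_le : ∀ (τ : Ω → ℕ), IsStoppingTime ℱ (fun ω => (τ ω : WithTop ℕ)) → (∀ ω, τ ω ≤ N) → ∀ i, i ≤ N →
      (∫ ω, U (min (τ ω) i) ω ∂μ) ≤ ∫ ω, U 0 ω ∂μ := by
    intro τ hτ hτle i
    induction i with
    | zero => intro _; simp
    | succ i ih =>
      intro h
      have hi : i < N := by omega
      rw [step τ hτ hτle i hi]
      have h2 : (∫ ω in {ω | i < τ ω}, ((μ[U (i + 1)|ℱ i]) ω - U i ω) ∂μ) ≤ 0 :=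
        integral_nonpos fun ω => sub_nonpos.2 (hcond_le i hi ω)
      have h1 := ih hi.le
      linarith
  -- equality for τstar
  have main_eq : ∀ i, i ≤ N →
      (∫ ω, U (min (τstar ω) i) ω ∂μ) = ∫ ω, U 0 ω ∂μ := by
    intro i
    induction i with
    | zero => intro _; simp
    | succ i ih =>
      intro h
      have hi : i < N := by omega
      rw [step τstar hst hτstar_le i hi]
      have h2 : (∫ ω in {ω | i < τstar ω}, ((μ[U (i + 1)|ℱ i]) ω - U i ω) ∂μ) = 0 := by
        have : ∀ ω ∈ {ω | i < τstar ω}, ((μ[U (i + 1)|ℱ i]) ω - U i ω) = 0 := by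
          intro ω hω
          have hne := hτstar_ne i ω hω hi.le
          have hmax := congrFun (hUrec i hi) ω
          rcases max_cases (Z i ω) ((μ[U (i + 1)|ℱ i]) ω) with ⟨he, _⟩ | ⟨he, _⟩
          · exact absurd (hmax.trans he) hne
          · rw [hmax, he]; ring
        have hAm0 : MeasurableSet {ω | i < τstar ω} := by
          have heq : {ω | i < τstar ω} = {ω | (τstar ω : WithTop ℕ) ≤ (i : WithTop ℕ)}ᶜ := by
            ext ω; simp [not_le]
          rw [heq]
          exact (ℱ.le i _ (hst i)).compl
        calc (∫ ω in {ω | i < τstar ω}, ((μ[U (i + 1)|ℱ i]) ω - U i ω) ∂μ)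
            = ∫ _ω in {ω | i < τstar ω}, (0 : ℝ) ∂μ := by
              apply setIntegral_congr_fun hAm0
              intro ω hω
              exact this ω hω
          _ = 0 := by simp
      rw [h2, add_zero]
      exact ih hi.le
  refine ⟨hst, ?_, ?_⟩
  · have hZτ : (fun ω => Z (τstar ω) ω) = fun ω => U (min (τstar ω) N) ω := by
      funext ω
      rw [min_eq_left (hτstar_le ω), hτstar_eq ω]
    rw [hZτ]
    exact main_eq N le_rfl
  · intro τ hτ hτle
    have hZτint : Integrable (fun ω => Z (τ ω) ω) μ := by
      have h3 := integrable_stoppedValue ℕ hτ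
        (u := fun j => Z (min j N)) (fun j => hint _ (min_le_right _ _)) (N := N) (fun ω => by simp [hτle ω])
      have : stoppedValue (fun j => Z (min j N)) (fun ω => (τ ω : WithTop ℕ)) = fun ω => Z (τ ω) ω := by
        funext ω
        simp only [stoppedValue]
        show Z (min (τ ω) N) ω = _
        congr 1
        exact min_eq_left (hτle ω)
      rwa [this] at h3
    have hUτint : Integrable (fun ω => U (min (τ ω) N) ω) μ := hSVint τ hτ hτle N
    have hle : (∫ ω, Z (τ ω) ω ∂μ) ≤ ∫ ω, U (min (τ ω) N) ω ∂μ := by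
      apply integral_mono hZτint hUτint
      intro ω
      show Z (τ ω) ω ≤ U (min (τ ω) N) ω
      rw [min_eq_left (hτle ω)]
      exact hZleU (τ ω) (hτle ω) ω
    exact hle.trans (main_le τ hτ hτle N le_rfl)
end
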